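/- arXiv:1906.07705 — 2 statements merged into one kernel-verified Lean document; each statement's English description precedes it below -/
import Mathlib

section
/- Let M be an n×n complex matrix with distinct indices a and b, and let λ be a scalar that is not an eigenvalue of M\a and not an eigenvalue of M\b, and not an eigenvalue of M\{a,b}. If the 2×2 isospectral reduction R over S = {a,b} at λ satisfies R_{a,a} = R_{b,b} for all such λ (in a nonempty open set, or as rational functions), then p(M\a, λ) = p(M\b, λ) as polynomials, i.e. a and b are cospectral. -/
open Matrix

noncomputable def isoReduction {n : ℕ} (M : Matrix (Fin n) (Fin n) ℂ)
    (p : Fin n → Prop) [DecidablePred p] (lam : ℂ) :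
    Matrix {i // p i} {i // p i} ℂ :=
  M.toBlock p p -
    M.toBlock p (fun i => ¬ p i) *
      (M.toBlock (fun i => ¬ p i) (fun i => ¬ p i) - lam • 1)⁻¹ *
        M.toBlock (fun i => ¬ p i) p

noncomputable def Mdel {n : ℕ} (M : Matrix (Fin n) (Fin n) ℂ) (a : Fin n) :
    Matrix {i : Fin n // ¬ i = a} {i : Fin n // ¬ i = a} ℂ :=
  M.toBlock (fun i => ¬ i = a) (fun i => ¬ i = a)

/-- `M \ {a,b}`. -/
noncomputable def Mdel2 {n : ℕ} (M : Matrix (Fin n) (Fin n) ℂ) (a b : Fin n) :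
    Matrix {i : Fin n // ¬ (i = a ∨ i = b)} {i : Fin n // ¬ (i = a ∨ i = b)} ℂ :=
  M.toBlock (fun i => ¬ (i = a ∨ i = b)) (fun i => ¬ (i = a ∨ i = b))

lemma eval_charpoly_det {m : Type*} [Fintype m] [DecidableEq m]
    (M : Matrix m m ℂ) (r : ℂ) :
    M.charpoly.eval r = (r • (1 : Matrix m m ℂ) - M).det := by
  rw [Matrix.charpoly, ← Polynomial.coe_evalRingHom, RingHom.map_det]
  congr 1
  ext i j
  by_cases hij : i = j <;>
    simp [hij, Matrix.charmatrix_apply, Matrix.one_apply, Matrix.diagonal_apply]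

lemma key {n : ℕ} (M : Matrix (Fin n) (Fin n) ℂ) (p : Fin n → Prop) [DecidablePred p]
    (c d : Fin n) (hcd : ¬ c = d) (hpc : p c)
    (hp : ∀ i, p i ↔ (i = c ∨ i = d)) (lam : ℂ)
    (hd : (M.toBlock (fun i => ¬ p i) (fun i => ¬ p i) - lam • 1).det ≠ 0) :
    (Mdel M d - lam • 1).det =
      (M.toBlock (fun i => ¬ p i) (fun i => ¬ p i) - lam • 1).det *
        (isoReduction M p lam ⟨c, hpc⟩ ⟨c, hpc⟩ - lam) := by
  classical
  set T := {i : Fin n // ¬ i = d}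
  set N : Matrix T T ℂ := Mdel M d - lam • 1 with hN
  set q : T → Prop := fun i => (i : Fin n) = c with hq
  haveI : Unique {j : T // q j} :=
    ⟨⟨⟨⟨c, hcd⟩, rfl⟩⟩, fun j => Subtype.ext (Subtype.ext j.property)⟩
  set e2 : {j : T // ¬ q j} ≃ {i : Fin n // ¬ p i} :=
    { toFun := fun j => ⟨(j : T), by
        rw [hp]; push_neg; exact ⟨j.property, (j : T).property⟩⟩
      invFun := fun i => ⟨⟨(i : Fin n), fun h => i.property ((hp _).2 (Or.inr h))⟩,
        fun h => i.property ((hp _).2 (Or.inl h))⟩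
      left_inv := fun j => rfl
      right_inv := fun i => rfl } with he2
  set E0 : Matrix {i : Fin n // ¬ p i} {i : Fin n // ¬ p i} ℂ :=
    M.toBlock (fun i => ¬ p i) (fun i => ¬ p i) - lam • 1 with hE0
  set f : {j : T // q j} → {i : Fin n // p i} := fun u => ⟨((u : T) : Fin n), by
    rw [hp]; exact Or.inl u.property⟩ with hf
  have hD : N.toBlock (fun j => ¬ q j) (fun j => ¬ q j) = E0.submatrix e2 e2 := by
    ext i j
    rcases i with ⟨⟨i, hi1⟩, hi2⟩
    rcases j with ⟨⟨j, hj1⟩, hj2⟩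
    simp [hN, hE0, Matrix.toBlock_apply, Matrix.one_apply, Mdel, he2,
      Subtype.ext_iff]
  haveI : Invertible E0 := (E0.invertibleOfIsUnitDet (isUnit_iff_ne_zero.mpr hd))
  haveI : Invertible (N.toBlock (fun j => ¬ q j) (fun j => ¬ q j)) := by
    rw [hD]; exact (E0.submatrixEquivInvertible e2 e2)
  have hdet := Matrix.det_toBlock N q
  rw [Matrix.det_fromBlocks₂₂] at hdet
  have hDdet : (N.toBlock (fun j => ¬ q j) (fun j => ¬ q j)).det = E0.det := by
    rw [hD, Matrix.det_submatrix_equiv_self]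
  have hDinv : ⅟(N.toBlock (fun j => ¬ q j) (fun j => ¬ q j)) = E0⁻¹.submatrix e2 e2 := by
    rw [Matrix.invOf_eq_nonsing_inv, hD, Matrix.inv_submatrix_equiv]
  have hB : N.toBlock q (fun j => ¬ q j)
      = (M.toBlock p (fun i => ¬ p i)).submatrix f e2 := by
    ext u j
    have h1 : ¬ ((u : T) = (j : T)) := fun hh => j.property (hh ▸ u.property)
    simp [hN, Mdel, Matrix.toBlock_apply, Matrix.one_apply, h1, he2, hf]
  have hC : N.toBlock (fun j => ¬ q j) q
      = (M.toBlock (fun i => ¬ p i) p).submatrix e2 f := by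
    ext j u
    have h1 : ¬ ((j : T) = (u : T)) := fun hh => j.property (hh ▸ u.property)
    simp [hN, Mdel, Matrix.toBlock_apply, Matrix.one_apply, h1, he2, hf]
  have hA : (N.toBlock q q) default default = M c c - lam := by
    simp [hN, Mdel, Matrix.toBlock_apply, Matrix.one_apply,
      (default : {j : T // q j}).property]
    rw [show ((default : {j : T // q j}) : T).val = c from (default : {j : T // q j}).property]
  have hfd : f default = ⟨c, hpc⟩ := by
    rw [hf]; exact Subtype.ext (default : {j : T // q j}).property
  rw [hdet, hDdet]
  congr 1
  rw [Matrix.det_unique, Matrix.sub_apply, hA, hB, hC, hDinv,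
    Matrix.submatrix_mul_equiv, Matrix.submatrix_mul_equiv, Matrix.submatrix_apply, hfd]
  simp only [isoReduction, Matrix.sub_apply, Matrix.toBlock_apply, ← hE0]
  ring

/-- If the two diagonal entries of the `2 × 2` isospectral reduction over `{a,b}` agree
for every admissible `λ`, then `a` and `b` are cospectral. -/
theorem cospectral_of_isoReduction_diag_eq {n : ℕ} (M : Matrix (Fin n) (Fin n) ℂ)
    (a b : Fin n) (hab : a ≠ b)
    (h : ∀ lam : ℂ, (Mdel M a - lam • 1).det ≠ 0 → (Mdel M b - lam • 1).det ≠ 0 →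
      (Mdel2 M a b - lam • 1).det ≠ 0 →
      isoReduction M (fun i => i = a ∨ i = b) lam ⟨a, Or.inl rfl⟩ ⟨a, Or.inl rfl⟩
        = isoReduction M (fun i => i = a ∨ i = b) lam ⟨b, Or.inr rfl⟩ ⟨b, Or.inr rfl⟩) :
    (Mdel M a).charpoly = (Mdel M b).charpoly := by
  classical
  have evalrel : ∀ {m : Type} [Fintype m] [DecidableEq m] (A : Matrix m m ℂ) (r : ℂ),
      (A - r • 1).det = (-1 : ℂ) ^ (Fintype.card m) * A.charpoly.eval r := by
    intro m _ _ A r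
    rw [eval_charpoly_det, show A - r • 1 = -(r • 1 - A) by rw [neg_sub], Matrix.det_neg]
  set P := (Mdel M a).charpoly with hP
  set Q := (Mdel M b).charpoly with hQ
  set Z := (Mdel2 M a b).charpoly with hZ
  have hPQZ : P * Q * Z ≠ 0 :=
    mul_ne_zero (mul_ne_zero (Mdel M a).charpoly_monic.ne_zero
      (Mdel M b).charpoly_monic.ne_zero) (Mdel2 M a b).charpoly_monic.ne_zero
  have hfin : Set.Finite {x : ℂ | (P * Q * Z).IsRoot x} :=
    Polynomial.finite_setOf_isRoot hPQZ
  have hinf : Set.Infinite {x : ℂ | (P * Q * Z).IsRoot x}ᶜ := hfin.infinite_compl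
  have hcard : Fintype.card {i : Fin n // ¬ i = a} = Fintype.card {i : Fin n // ¬ i = b} := by
    rw [Fintype.card_subtype_compl, Fintype.card_subtype_compl,
      Fintype.card_subtype_eq, Fintype.card_subtype_eq]
  have hsub : {x : ℂ | (P * Q * Z).IsRoot x}ᶜ ⊆ {x : ℂ | (P - Q).IsRoot x} := by
    intro lam hlam
    simp only [Set.mem_compl_iff, Set.mem_setOf_eq, Polynomial.IsRoot,
      Polynomial.eval_mul, mul_ne_zero_iff, ← Ne.eq_def] at hlam
    obtain ⟨⟨hPe, hQe⟩, hZe⟩ := hlam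
    have hda : (Mdel M a - lam • 1).det ≠ 0 := by
      rw [evalrel]; exact mul_ne_zero (pow_ne_zero _ (by norm_num)) hPe
    have hdb : (Mdel M b - lam • 1).det ≠ 0 := by
      rw [evalrel]; exact mul_ne_zero (pow_ne_zero _ (by norm_num)) hQe
    have hdz : (Mdel2 M a b - lam • 1).det ≠ 0 := by
      rw [evalrel]; exact mul_ne_zero (pow_ne_zero _ (by norm_num)) hZe
    have hiso := h lam hda hdb hdz
    have k1 := key M (fun i => i = a ∨ i = b) a b (fun hh => hab hh) (Or.inl rfl)
      (fun i => Iff.rfl) lam hdz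
    have k2 := key M (fun i => i = a ∨ i = b) b a (fun hh => hab hh.symm) (Or.inr rfl)
      (fun i => or_comm) lam hdz
    have hdets : (Mdel M a - lam • 1).det = (Mdel M b - lam • 1).det := by
      rw [k1, k2, hiso]
    rw [evalrel, evalrel, hcard] at hdets
    have hPQ : P.eval lam = Q.eval lam :=
      mul_left_cancel₀ (pow_ne_zero _ (by norm_num : (-1 : ℂ) ≠ 0)) hdets
    simp [Polynomial.IsRoot, Polynomial.eval_sub, sub_eq_zero, hPQ]
  have : P - Q = 0 :=
    Polynomial.eq_zero_of_infinite_isRoot _ (hinf.mono hsub)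
  exact sub_eq_zero.mp this
end

section
/- Let M be an n×n complex matrix with distinct indices a and b. If a and b are cospectral, i.e. char(M\a) = char(M\b), then for every λ not an eigenvalue of M\{a,b}, the 2×2 isospectral reduction R over S = {a,b} at λ satisfies R_{a,a} = R_{b,b}. -/
open Matrix

lemma eval_charpoly' {m : Type*} [Fintype m] [DecidableEq m] (M : Matrix m m ℂ) (lam : ℂ) :
    (M.charpoly).eval lam = (lam • (1 : Matrix m m ℂ) - M).det := by
  rw [Matrix.charpoly, ← Polynomial.coe_evalRingHom, RingHom.map_det]
  congr 1
  ext i j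
  by_cases h : i = j <;>
    simp [Matrix.charmatrix_apply, Matrix.one_apply, h]

lemma matrix_inv_neg {m : Type*} [Fintype m] [DecidableEq m] (A : Matrix m m ℂ) :
    (-A)⁻¹ = -(A⁻¹) := by
  by_cases h : IsUnit A.det
  · apply Matrix.inv_eq_right_inv
    rw [neg_mul_neg, Matrix.mul_nonsing_inv _ h]
  · rw [Matrix.nonsing_inv_apply_not_isUnit _ h, Matrix.nonsing_inv_apply_not_isUnit, neg_zero]
    rw [Matrix.det_neg]
    exact fun hu => h (isUnit_of_mul_isUnit_right hu)

lemma det_one_dim_schur {m : Type*} [Fintype m] [DecidableEq m]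
    (N : Matrix m m ℂ) (q : m → Prop) [DecidablePred q] (x : m) (hx : q x)
    (hu : ∀ y, q y → y = x)
    (h : IsUnit (N.toBlock (fun i => ¬ q i) (fun i => ¬ q i)).det) :
    N.det = (N.toBlock (fun i => ¬ q i) (fun i => ¬ q i)).det *
      (N x x - (N.toBlock q (fun i => ¬ q i) * (N.toBlock (fun i => ¬ q i) (fun i => ¬ q i))⁻¹ *
        N.toBlock (fun i => ¬ q i) q) ⟨x, hx⟩ ⟨x, hx⟩) := by
  letI : Unique {i // q i} := ⟨⟨⟨x, hx⟩⟩, fun y => Subtype.ext (hu _ y.2)⟩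
  haveI := Matrix.invertibleOfIsUnitDet _ h
  rw [Matrix.det_toBlock N q, Matrix.det_fromBlocks₂₂]
  congr 1
  rw [invOf_eq_nonsing_inv, Matrix.det_unique, Matrix.sub_apply]
  rfl

def ee {n : ℕ} (a b : Fin n) :
    {x : {i : Fin n // ¬ i = b} // ¬ (x : Fin n) = a} ≃ {i : Fin n // ¬ (i = a ∨ i = b)} where
  toFun x := ⟨x.1.1, fun h => h.elim (fun h1 => x.2 h1) (fun h2 => x.1.2 h2)⟩
  invFun i := ⟨⟨i.1, fun h => i.2 (Or.inr h)⟩, fun h => i.2 (Or.inl h)⟩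
  left_inv x := rfl
  right_inv i := rfl

lemma key_s6 {n : ℕ} (M : Matrix (Fin n) (Fin n) ℂ) (a b : Fin n) (hab : ¬ a = b) (lam : ℂ)
    (hd : (Mdel2 M a b - lam • 1).det ≠ 0) :
    ((Mdel M b).charpoly).eval lam =
      (lam • 1 - Mdel2 M a b).det *
        (lam - isoReduction M (fun i => i = a ∨ i = b) lam ⟨a, Or.inl rfl⟩ ⟨a, Or.inl rfl⟩) := by
  classical
  set q : {i : Fin n // ¬ i = b} → Prop := fun x => (x : Fin n) = a with hq
  set N : Matrix {i : Fin n // ¬ i = b} {i : Fin n // ¬ i = b} ℂ := lam • 1 - Mdel M b with hN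
  set e := ee a b
  have hD : N.toBlock (fun x => ¬ q x) (fun x => ¬ q x)
      = (-(Mdel2 M a b - lam • 1)).submatrix e e := by
    ext y z
    by_cases h : (y : {i : Fin n // ¬ i = b}).1 = (z : {i : Fin n // ¬ i = b}).1 <;>
      simp [hN, Mdel, Mdel2, Matrix.toBlock_apply, Matrix.one_apply, e, ee,
        Subtype.ext_iff, h]
  have hB : N.toBlock q (fun x => ¬ q x)
      = (-(M.toBlock (fun i => i = a ∨ i = b) (fun i => ¬ (i = a ∨ i = b)))).submatrix
          (fun _ => (⟨a, Or.inl rfl⟩ : {i : Fin n // i = a ∨ i = b})) e := by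
    ext x y
    have hx : (x : {i : Fin n // ¬ i = b}).1 = a := x.2
    have hy : ¬ (y : {i : Fin n // ¬ i = b}).1 = a := y.2
    have hy' : ¬ a = (y : {i : Fin n // ¬ i = b}).1 := fun h => hy h.symm
    simp [hN, Mdel, Matrix.toBlock_apply, Matrix.one_apply, e, ee, Subtype.ext_iff, hx, hy']
  have hC : N.toBlock (fun x => ¬ q x) q
      = (-(M.toBlock (fun i => ¬ (i = a ∨ i = b)) (fun i => i = a ∨ i = b))).submatrix
          e (fun _ => (⟨a, Or.inl rfl⟩ : {i : Fin n // i = a ∨ i = b})) := by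
    ext y x
    have hx : (x : {i : Fin n // ¬ i = b}).1 = a := x.2
    have hy : ¬ (y : {i : Fin n // ¬ i = b}).1 = a := y.2
    simp [hN, Mdel, Matrix.toBlock_apply, Matrix.one_apply, e, ee, Subtype.ext_iff, hx, hy]
  have hdet : (N.toBlock (fun x => ¬ q x) (fun x => ¬ q x)).det
      = (lam • 1 - Mdel2 M a b).det := by
    rw [hD, Matrix.det_submatrix_equiv_self, neg_sub]
  have hunit : IsUnit (N.toBlock (fun x => ¬ q x) (fun x => ¬ q x)).det := by
    rw [hD, Matrix.det_submatrix_equiv_self, Matrix.det_neg]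
    simp only [isUnit_iff_ne_zero, ne_eq, mul_eq_zero, not_or]
    exact ⟨pow_ne_zero _ (by norm_num), hd⟩
  have hschur := det_one_dim_schur N q ⟨a, hab⟩ rfl (fun y hy => Subtype.ext hy) hunit
  rw [eval_charpoly', hschur, hdet]
  congr 1
  have hNxx : N ⟨a, hab⟩ ⟨a, hab⟩ = lam - M a a := by
    simp [hN, Mdel, Matrix.one_apply, Matrix.toBlock_apply]
  rw [hNxx, hB, hD, hC, Matrix.inv_submatrix_equiv, matrix_inv_neg,
    Matrix.submatrix_mul_equiv, Matrix.submatrix_mul_equiv]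
  simp only [isoReduction, Mdel2, Matrix.sub_apply, Matrix.submatrix_apply, Matrix.neg_mul,
    Matrix.mul_neg, neg_neg, Matrix.neg_apply, Matrix.toBlock_apply]
  ring

lemma isoReduction_congr {n : ℕ} (M : Matrix (Fin n) (Fin n) ℂ)
    (p q : Fin n → Prop) [DecidablePred p] [DecidablePred q] (h : ∀ i, p i ↔ q i) (lam : ℂ)
    (i j : {i // p i}) :
    isoReduction M p lam i j = isoReduction M q lam ⟨i, (h i).1 i.2⟩ ⟨j, (h j).1 j.2⟩ := by
  have hc : ∀ i, ¬ p i ↔ ¬ q i := fun i => not_congr (h i)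
  have h1 : M.toBlock p p = (M.toBlock q q).submatrix
      (Equiv.subtypeEquivRight h) (Equiv.subtypeEquivRight h) := rfl
  have h2 : M.toBlock p (fun i => ¬ p i) = (M.toBlock q (fun i => ¬ q i)).submatrix
      (Equiv.subtypeEquivRight h) (Equiv.subtypeEquivRight hc) := rfl
  have h3 : M.toBlock (fun i => ¬ p i) p = (M.toBlock (fun i => ¬ q i) q).submatrix
      (Equiv.subtypeEquivRight hc) (Equiv.subtypeEquivRight h) := rfl
  have h4 : M.toBlock (fun i => ¬ p i) (fun i => ¬ p i) - lam • 1
      = (M.toBlock (fun i => ¬ q i) (fun i => ¬ q i) - lam • 1).submatrix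
          (Equiv.subtypeEquivRight hc) (Equiv.subtypeEquivRight hc) := by
    ext x y
    by_cases hxy : (x : Fin n) = (y : Fin n) <;>
      simp [Matrix.toBlock_apply, Matrix.one_apply, Subtype.ext_iff,
        Equiv.subtypeEquivRight_apply, hxy]
  rw [isoReduction, isoReduction, h1, h2, h3, h4, Matrix.inv_submatrix_equiv,
    Matrix.submatrix_mul_equiv, Matrix.submatrix_mul_equiv]
  rfl

lemma sub_det_congr {n : ℕ} (M : Matrix (Fin n) (Fin n) ℂ) (a b : Fin n) (lam : ℂ) :
    Mdel2 M b a - lam • 1 = (Mdel2 M a b - lam • 1).submatrix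
      (Equiv.subtypeEquivRight (fun i => not_congr or_comm))
      (Equiv.subtypeEquivRight (fun i => not_congr or_comm)) := by
  ext x y
  by_cases hxy : (x : Fin n) = (y : Fin n) <;>
    simp [Mdel2, Matrix.toBlock_apply, Matrix.one_apply, Subtype.ext_iff,
      Equiv.subtypeEquivRight_apply, hxy]

lemma smul_sub_det_congr {n : ℕ} (M : Matrix (Fin n) (Fin n) ℂ) (a b : Fin n) (lam : ℂ) :
    (lam • 1 - Mdel2 M b a).det = (lam • 1 - Mdel2 M a b).det := by
  have h : lam • (1 : Matrix _ _ ℂ) - Mdel2 M b a = -(Mdel2 M b a - lam • 1) :=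
    (neg_sub _ _).symm
  have h' : lam • (1 : Matrix _ _ ℂ) - Mdel2 M a b = -(Mdel2 M a b - lam • 1) :=
    (neg_sub _ _).symm
  rw [h, h', sub_det_congr M a b lam]
  have hneg : (-((Mdel2 M a b - lam • 1).submatrix
      (Equiv.subtypeEquivRight (fun i => not_congr or_comm))
      (Equiv.subtypeEquivRight (fun i => not_congr or_comm))))
      = (-(Mdel2 M a b - lam • 1)).submatrix
      (Equiv.subtypeEquivRight (fun i => not_congr or_comm))
      (Equiv.subtypeEquivRight (fun i => not_congr or_comm)) := rfl
  rw [hneg, Matrix.det_submatrix_equiv_self]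


set_option maxHeartbeats 1000000 in
/-- If `a` and `b` are cospectral then for every `λ` that is not an eigenvalue of
`M \ {a,b}`, the `2 × 2` isospectral reduction over `{a,b}` has equal diagonal entries. -/
theorem isoReduction_diag_eq_of_cospectral {n : ℕ} (M : Matrix (Fin n) (Fin n) ℂ)
    (a b : Fin n) (hab : a ≠ b)
    (hcosp : (Mdel M a).charpoly = (Mdel M b).charpoly) :
    ∀ lam : ℂ, (Mdel2 M a b - lam • 1).det ≠ 0 →
      isoReduction M (fun i => i = a ∨ i = b) lam ⟨a, Or.inl rfl⟩ ⟨a, Or.inl rfl⟩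
        = isoReduction M (fun i => i = a ∨ i = b) lam ⟨b, Or.inr rfl⟩ ⟨b, Or.inr rfl⟩ := by
  intro lam hlam
  have hd' : (Mdel2 M b a - lam • 1).det ≠ 0 := by
    rw [sub_det_congr M a b lam, Matrix.det_submatrix_equiv_self]
    exact hlam
  have h1 := key_s6 M a b hab lam hlam
  have h2 := key_s6 M b a (fun h => hab h.symm) lam hd'
  rw [hcosp, h1, smul_sub_det_congr M a b lam] at h2
  have hR : isoReduction M (fun i => i = b ∨ i = a) lam ⟨b, Or.inl rfl⟩ ⟨b, Or.inl rfl⟩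
      = isoReduction M (fun i => i = a ∨ i = b) lam ⟨b, Or.inr rfl⟩ ⟨b, Or.inr rfl⟩ :=
    isoReduction_congr M (fun i => i = b ∨ i = a) (fun i => i = a ∨ i = b)
      (fun i => or_comm) lam ⟨b, Or.inl rfl⟩ ⟨b, Or.inl rfl⟩
  rw [hR] at h2
  have hdne : (lam • 1 - Mdel2 M a b).det ≠ 0 := by
    have h' : lam • (1 : Matrix _ _ ℂ) - Mdel2 M a b = -(Mdel2 M a b - lam • 1) :=
      (neg_sub _ _).symm
    rw [h', Matrix.det_neg]
    exact mul_ne_zero (pow_ne_zero _ (by norm_num)) hlam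
  have h3 := mul_left_cancel₀ hdne h2.symm
  linear_combination h3
end
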